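/- ∫₀⁴ (1 + k(λ))·K(k(λ)) dλ = π², where k(λ) = (4-λ)/(4+λ) and K is the complete elliptic integral of the first kind. -/

import Mathlib

open Real

/-- The complete elliptic integral of the first kind. -/
noncomputable def ellipticK (k : ℝ) : ℝ :=
  ∫ t in (0:ℝ)..1, 1 / Real.sqrt ((1 - t^2) * (1 - k^2 * t^2))

section Aux
set_option maxHeartbeats 1000000
open MeasureTheory intervalIntegral Set

lemma arctan_nonneg' {x : ℝ} (hx : 0 ≤ x) : 0 ≤ arctan x := by
  have := Real.arctan_strictMono.monotone hx
  rwa [Real.arctan_zero] at this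

lemma ftc4 : ∫ a in (0:ℝ)..1, 16 * arctan (Real.sqrt ((1-a)/(1+a))) / Real.sqrt (1-a^2) = π^2 := by
  have hJcont : ContinuousOn (fun a : ℝ => -16 * (arctan (Real.sqrt ((1-a)/(1+a))))^2) (Icc 0 1) := by
    apply ContinuousOn.mul continuousOn_const
    apply ContinuousOn.pow
    apply Real.continuous_arctan.comp_continuousOn
    apply ContinuousOn.sqrt
    exact ContinuousOn.div (by fun_prop) (by fun_prop) (fun x hx => by nlinarith [hx.1])
  have hJderiv : ∀ a ∈ Ioo (0:ℝ) 1, HasDerivAt (fun a : ℝ => -16 * (arctan (Real.sqrt ((1-a)/(1+a))))^2)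
      (16 * arctan (Real.sqrt ((1-a)/(1+a))) / Real.sqrt (1-a^2)) a := by
    intro a ha
    obtain ⟨ha0, ha1⟩ := ha
    have h1a : (0:ℝ) < 1 + a := by linarith
    have hq : (0:ℝ) < (1-a)/(1+a) := div_pos (by linarith) h1a
    set r := Real.sqrt ((1-a)/(1+a)) with hrdef
    have hr : 0 < r := Real.sqrt_pos.mpr hq
    have hr2 : r^2 = (1-a)/(1+a) := Real.sq_sqrt hq.le
    have hsq : Real.sqrt (1-a^2) = r * (1+a) := by
      rw [show (1:ℝ)-a^2 = (r*(1+a))^2 by rw [mul_pow, hr2]; field_simp; ring]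
      exact Real.sqrt_sq (by positivity)
    have h1' : HasDerivAt (fun a : ℝ => 1-a) (-1) a := by
      simpa using (hasDerivAt_id a).const_sub 1
    have h2' : HasDerivAt (fun a : ℝ => 1+a) 1 a := by
      simpa using (hasDerivAt_id a).const_add 1
    have hqd : HasDerivAt (fun a : ℝ => (1-a)/(1+a)) (-2/(1+a)^2) a := by
      refine (h1'.div h2' h1a.ne').congr_deriv ?_
      field_simp
      ring
    have hrd : HasDerivAt (fun a : ℝ => Real.sqrt ((1-a)/(1+a)))
        (1/(2*r) * (-2/(1+a)^2)) a := (Real.hasDerivAt_sqrt hq.ne').comp a hqd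
    have harctan : HasDerivAt (fun a : ℝ => arctan (Real.sqrt ((1-a)/(1+a))))
        (1/(1+r^2) * (1/(2*r) * (-2/(1+a)^2))) a := (Real.hasDerivAt_arctan _).comp a hrd
    have hfull := ((harctan.pow 2).const_mul (-16 : ℝ))
    refine hfull.congr_deriv ?_
    rw [hsq, hr2, show Real.sqrt ((1-a)/(1+a)) = r from rfl]
    set A := arctan r with hA
    rw [pow_one]
    have hden : ((1:ℝ) + (1-a)/(1+a)) = 2/(1+a) := by field_simp; ring
    rw [hden]
    field_simp
    ring
  have hnonneg : ∀ a ∈ Ioo (0:ℝ) 1, 0 ≤ 16 * arctan (Real.sqrt ((1-a)/(1+a))) / Real.sqrt (1-a^2) := by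
    intro a ha
    have h := arctan_nonneg' (Real.sqrt_nonneg ((1-a)/(1+a)))
    positivity
  have hint : IntervalIntegrable (fun a : ℝ => 16 * arctan (Real.sqrt ((1-a)/(1+a))) / Real.sqrt (1-a^2)) volume 0 1 := by
    rw [intervalIntegrable_iff_integrableOn_Ioc_of_le (by norm_num)]
    exact intervalIntegral.integrableOn_deriv_of_nonneg hJcont hJderiv hnonneg
  rw [intervalIntegral.integral_eq_sub_of_hasDeriv_right_of_le (by norm_num) hJcont
    (fun x hx => (hJderiv x hx).hasDerivWithinAt) hint]
  norm_num [Real.arctan_one]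
  ring

lemma ftc3 {a : ℝ} (ha : a ∈ Ioo (0:ℝ) 1) :
    ∫ t in (0:ℝ)..1, 8 / (Real.sqrt (1-t^2) * (1 + a * Real.sqrt (1-t^2)))
      = 16 * arctan (Real.sqrt ((1-a)/(1+a))) / Real.sqrt (1-a^2) := by
  obtain ⟨ha0, ha1⟩ := ha
  have h1a : (0:ℝ) < 1 + a := by linarith
  have hq : (0:ℝ) < (1-a)/(1+a) := div_pos (by linarith) h1a
  set c := Real.sqrt ((1-a)/(1+a)) with hcdef
  have hc : 0 < c := Real.sqrt_pos.mpr hq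
  have hc2 : c^2 = (1-a)/(1+a) := Real.sq_sqrt hq.le
  have hsqa : Real.sqrt (1-a^2) = c * (1+a) := by
    rw [show (1:ℝ)-a^2 = (c*(1+a))^2 by rw [mul_pow, hc2]; field_simp; ring]
    exact Real.sqrt_sq (by positivity)
  -- antiderivative
  set H : ℝ → ℝ := fun t => 16 / Real.sqrt (1-a^2) * arctan (c * t / (1 + Real.sqrt (1-t^2))) with hHdef
  have hHcont : ContinuousOn H (Icc 0 1) := by
    apply ContinuousOn.mul continuousOn_const
    apply Real.continuous_arctan.comp_continuousOn
    apply ContinuousOn.div (by fun_prop) (by fun_prop)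
    intro x _
    positivity
  have hHderiv : ∀ t ∈ Ioo (0:ℝ) 1, HasDerivAt H
      (8 / (Real.sqrt (1-t^2) * (1 + a * Real.sqrt (1-t^2)))) t := by
    intro t ht
    obtain ⟨ht0, ht1⟩ := ht
    have h1t : (0:ℝ) < 1 - t^2 := by nlinarith
    set s := Real.sqrt (1-t^2) with hsdef
    have hs : 0 < s := Real.sqrt_pos.mpr h1t
    have hs2 : s^2 = 1 - t^2 := Real.sq_sqrt h1t.le
    have hsd : HasDerivAt (fun t : ℝ => Real.sqrt (1-t^2)) (1/(2*s) * (-2*t)) t := by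
      have hinner : HasDerivAt (fun t : ℝ => 1-t^2) (-2*t) t := by
        simpa using ((hasDerivAt_pow 2 t).const_sub 1)
      exact (Real.hasDerivAt_sqrt h1t.ne').comp t hinner
    have hnum : HasDerivAt (fun t : ℝ => c * t) c t := by
      simpa using (hasDerivAt_id t).const_mul c
    have hden : HasDerivAt (fun t : ℝ => 1 + Real.sqrt (1-t^2)) (1/(2*s) * (-2*t)) t :=
      hsd.const_add 1
    have hdenne : (1:ℝ) + Real.sqrt (1-t^2) ≠ 0 := by positivity
    have hw : HasDerivAt (fun t : ℝ => c * t / (1 + Real.sqrt (1-t^2)))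
        ((c * (1 + s) - c * t * (1/(2*s) * (-2*t))) / (1+s)^2) t := hnum.div hden hdenne
    have hw' : (c * (1 + s) - c * t * (1/(2*s) * (-2*t))) / (1+s)^2 = c / (s * (1+s)) := by
      rw [div_eq_div_iff (by positivity) (by positivity)]
      field_simp
      linear_combination hs2
    rw [hw'] at hw
    have harc : HasDerivAt (fun t : ℝ => arctan (c * t / (1 + Real.sqrt (1-t^2))))
        (1/(1 + (c * t / (1+s))^2) * (c / (s * (1+s)))) t :=
      (Real.hasDerivAt_arctan _).comp t hw
    have hfull := harc.const_mul (16 / Real.sqrt (1-a^2))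
    have heq : 16 / Real.sqrt (1-a^2) * (1/(1 + (c * t / (1+s))^2) * (c / (s * (1+s))))
        = 8 / (s * (1 + a * s)) := by
      rw [hsqa]
      have h1w : 1 + (c * t / (1+s))^2 = 2*(1+a*s)/((1+a)*(1+s)) := by
        rw [div_pow, mul_pow, hc2]
        rw [show t^2 = (1-s)*(1+s) by nlinarith [hs2]]
        field_simp
        ring
      rw [h1w]
      have h1as : (0:ℝ) < 1 + a*s := by positivity
      field_simp
      ring
    rw [heq] at hfull
    exact hfull
  have hnonneg : ∀ t ∈ Ioo (0:ℝ) 1, 0 ≤ 8 / (Real.sqrt (1-t^2) * (1 + a * Real.sqrt (1-t^2))) := by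
    intro t _
    have := Real.sqrt_nonneg (1-t^2)
    positivity
  have hint : IntervalIntegrable (fun t : ℝ => 8 / (Real.sqrt (1-t^2) * (1 + a * Real.sqrt (1-t^2)))) volume 0 1 := by
    rw [intervalIntegrable_iff_integrableOn_Ioc_of_le (by norm_num)]
    exact intervalIntegral.integrableOn_deriv_of_nonneg hHcont hHderiv hnonneg
  rw [intervalIntegral.integral_eq_sub_of_hasDeriv_right_of_le (by norm_num) hHcont
    (fun x hx => (hHderiv x hx).hasDerivWithinAt) hint]
  have : H 1 = 16 * arctan c / Real.sqrt (1-a^2) := by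
    simp only [hHdef]
    norm_num
    ring
  rw [this]
  have : H 0 = 0 := by simp [hHdef]
  rw [this, sub_zero]

lemma ftc2 {t : ℝ} (ht : t ∈ Ioo (0:ℝ) 1) :
    8 * Real.log (1 + Real.sqrt (1-t^2)) / (1-t^2)
      = ∫ a in (0:ℝ)..1, 8 / (Real.sqrt (1-t^2) * (1 + a * Real.sqrt (1-t^2))) := by
  obtain ⟨ht0, ht1⟩ := ht
  have h1t : (0:ℝ) < 1 - t^2 := by nlinarith
  set s := Real.sqrt (1-t^2) with hsdef
  have hs : 0 < s := Real.sqrt_pos.mpr h1t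
  have hs2 : s^2 = 1 - t^2 := Real.sq_sqrt h1t.le
  have hderiv : ∀ a ∈ uIcc (0:ℝ) 1, HasDerivAt (fun a : ℝ => 8 / (1-t^2) * Real.log (1 + a * s))
      (8 / (s * (1 + a * s))) a := by
    intro a ha
    rw [Set.uIcc_of_le (by norm_num)] at ha
    have h1as : (0:ℝ) < 1 + a * s := by
      have := ha.1
      positivity
    have hinner : HasDerivAt (fun a : ℝ => 1 + a * s) s a := by
      simpa using ((hasDerivAt_id a).mul_const s).const_add 1
    have hlog := (Real.hasDerivAt_log h1as.ne').comp a hinner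
    have := hlog.const_mul (8 / (1-t^2))
    refine this.congr_deriv ?_
    rw [← hs2]
    field_simp
  have hcont : IntervalIntegrable (fun a : ℝ => 8 / (s * (1 + a * s))) volume 0 1 := by
    apply ContinuousOn.intervalIntegrable
    apply ContinuousOn.div continuousOn_const (by fun_prop)
    intro a ha
    rw [Set.uIcc_of_le (by norm_num)] at ha
    have h1 := ha.1
    positivity
  have := intervalIntegral.integral_eq_sub_of_hasDerivAt hderiv hcont
  rw [this]
  simp
  rw [← hs2]
  field_simp

lemma ftc1 {t : ℝ} (ht : t ∈ Ioo (0:ℝ) 1) :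
    ∫ l in (0:ℝ)..4, 8 / Real.sqrt ((1-t^2) * ((4+l)^2 - (4-l)^2 * t^2))
      = 8 * Real.log (1 + Real.sqrt (1-t^2)) / (1-t^2) := by
  obtain ⟨ht0, ht1⟩ := ht
  have h1t : (0:ℝ) < 1 - t^2 := by nlinarith
  have h1pt : (0:ℝ) < 1 + t := by linarith
  have h1mt : (0:ℝ) < 1 - t := by linarith
  set s := Real.sqrt (1-t^2) with hsdef
  have hs : 0 < s := Real.sqrt_pos.mpr h1t
  have hs2 : s^2 = 1 - t^2 := Real.sq_sqrt h1t.le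
  set p : ℝ := 4*(1-t)/(1+t) with hpdef
  set q : ℝ := 4*(1+t)/(1-t) with hqdef
  have hp : 0 < p := by positivity
  have hq : 0 < q := by positivity
  set F : ℝ → ℝ := fun l => 16/(1-t^2) * Real.log (Real.sqrt (l+p) + Real.sqrt (l+q)) with hFdef
  have hpos : ∀ l ∈ uIcc (0:ℝ) 4, (0:ℝ) < (1-t^2) * ((4+l)^2 - (4-l)^2 * t^2) := by
    intro l hl
    rw [Set.uIcc_of_le (by norm_num)] at hl
    obtain ⟨hl0, hl4⟩ := hl
    have h1 : (4-l)^2 ≤ (4+l)^2 := by nlinarith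
    have h2 : (4-l)^2 * t^2 ≤ (4+l)^2 * t^2 := by nlinarith [sq_nonneg t]
    have h3 : (0:ℝ) < (4+l)^2 * (1-t^2) := mul_pos (by positivity) h1t
    nlinarith
  have hderiv : ∀ l ∈ uIcc (0:ℝ) 4, HasDerivAt F
      (8 / Real.sqrt ((1-t^2) * ((4+l)^2 - (4-l)^2 * t^2))) l := by
    intro l hl
    have hl' := hl
    rw [Set.uIcc_of_le (by norm_num)] at hl'
    obtain ⟨hl0, hl4⟩ := hl'
    have hlp : (0:ℝ) < l + p := by linarith
    have hlq : (0:ℝ) < l + q := by linarith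
    set A := Real.sqrt (l+p) with hAdef
    set B := Real.sqrt (l+q) with hBdef
    have hA : 0 < A := Real.sqrt_pos.mpr hlp
    have hB : 0 < B := Real.sqrt_pos.mpr hlq
    have hA2 : A^2 = l + p := Real.sq_sqrt hlp.le
    have hB2 : B^2 = l + q := Real.sq_sqrt hlq.le
    have hAd : HasDerivAt (fun l : ℝ => Real.sqrt (l+p)) (1/(2*A)) l := by
      have := (Real.hasDerivAt_sqrt hlp.ne').comp l ((hasDerivAt_id l).add_const p)
      simpa [hAdef, Function.comp_def] using this
    have hBd : HasDerivAt (fun l : ℝ => Real.sqrt (l+q)) (1/(2*B)) l := by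
      have := (Real.hasDerivAt_sqrt hlq.ne').comp l ((hasDerivAt_id l).add_const q)
      simpa [hBdef, Function.comp_def] using this
    have hABd : HasDerivAt (fun l : ℝ => Real.sqrt (l+p) + Real.sqrt (l+q)) (1/(2*A) + 1/(2*B)) l :=
      hAd.add hBd
    have hlog := (Real.hasDerivAt_log (by positivity : A + B ≠ 0)).comp l hABd
    have hfull := hlog.const_mul (16/(1-t^2))
    have hkey : Real.sqrt ((1-t^2) * ((4+l)^2 - (4-l)^2 * t^2)) = (1-t^2) * A * B := by
      rw [show (1-t^2) * ((4+l)^2 - (4-l)^2 * t^2) = ((1-t^2) * A * B)^2 by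
        rw [mul_pow, mul_pow, hA2, hB2, hpdef, hqdef]; field_simp; ring]
      exact Real.sqrt_sq (by positivity)
    have heq : 16/(1-t^2) * ((A + B)⁻¹ * (1/(2*A) + 1/(2*B)))
        = 8 / Real.sqrt ((1-t^2) * ((4+l)^2 - (4-l)^2 * t^2)) := by
      rw [hkey]
      have hAB : (0:ℝ) < A + B := by positivity
      field_simp
      ring
    rw [← heq]
    exact hfull
  have hint : IntervalIntegrable (fun l : ℝ => 8 / Real.sqrt ((1-t^2) * ((4+l)^2 - (4-l)^2 * t^2))) volume 0 4 := by
    apply ContinuousOn.intervalIntegrable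
    apply ContinuousOn.div continuousOn_const
    · exact (ContinuousOn.sqrt (by fun_prop))
    · intro l hl
      exact (Real.sqrt_pos.mpr (hpos l hl)).ne'
  rw [intervalIntegral.integral_eq_sub_of_hasDerivAt hderiv hint]
  -- endpoint evaluation
  have h4p : (4:ℝ) + p = 8/(1+t) := by rw [hpdef]; field_simp; ring
  have h4q : (4:ℝ) + q = 8/(1-t) := by rw [hqdef]; field_simp; ring
  set X := Real.sqrt (4+p) + Real.sqrt (4+q) with hXdef
  set Y := Real.sqrt (0+p) + Real.sqrt (0+q) with hYdef
  have hXpos : 0 < X := by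
    have : (0:ℝ) < 4 + p := by linarith
    have h := Real.sqrt_pos.mpr this
    positivity
  have hYpos : 0 < Y := by
    have h0p : (0:ℝ) < 0 + p := by linarith
    have h := Real.sqrt_pos.mpr h0p
    positivity
  have hcross1 : Real.sqrt (4+p) * Real.sqrt (4+q) = 8/s := by
    rw [← Real.sqrt_mul (by linarith) ]
    rw [show (4+p)*(4+q) = (8/s)^2 by
      rw [h4p, h4q, div_pow, hs2]; field_simp [h1pt.ne', h1mt.ne']; ring]
    exact Real.sqrt_sq (by positivity)
  have hcross2 : Real.sqrt (0+p) * Real.sqrt (0+q) = 4 := by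
    rw [← Real.sqrt_mul (by linarith)]
    rw [show (0+p)*(0+q) = (4:ℝ)^2 by rw [hpdef, hqdef]; field_simp; ring]
    exact Real.sqrt_sq (by norm_num)
  have hX2 : X^2 = (4+p) + (4+q) + 2*(8/s) := by
    rw [hXdef, add_pow_two, Real.sq_sqrt (by linarith : (0:ℝ) ≤ 4+p),
      Real.sq_sqrt (by linarith : (0:ℝ) ≤ 4+q), mul_assoc, hcross1]
    ring
  have hY2 : Y^2 = (0+p) + (0+q) + 2*4 := by
    rw [hYdef, add_pow_two, Real.sq_sqrt (by linarith : (0:ℝ) ≤ 0+p),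
      Real.sq_sqrt (by linarith : (0:ℝ) ≤ 0+q), mul_assoc, hcross2]
    ring
  have hY2' : Y^2 = 16/s^2 := by
    rw [hY2, hpdef, hqdef, hs2]; field_simp [h1pt.ne', h1mt.ne']; ring
  have hX2' : X^2 = 16/s^2 + 16/s := by
    rw [hX2, h4p, h4q, hs2]; field_simp [h1pt.ne', h1mt.ne', hs.ne']
    ring
  have hXY : X^2 = (1+s) * Y^2 := by
    rw [hX2', hY2']; field_simp [hs.ne']
  have hratio : (X/Y)^2 = 1 + s := by
    rw [div_pow, hXY]
    field_simp
  have hlogeq : Real.log X - Real.log Y = Real.log (1+s) / 2 := by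
    rw [← Real.log_div hXpos.ne' hYpos.ne', ← hratio, Real.log_pow]
    push_cast
    ring
  rw [hFdef]
  simp only
  rw [show 16/(1-t^2) * Real.log (Real.sqrt (4+p) + Real.sqrt (4+q))
      - 16/(1-t^2) * Real.log (Real.sqrt (0+p) + Real.sqrt (0+q))
      = 16/(1-t^2) * (Real.log X - Real.log Y) by rw [hXdef, hYdef]; ring]
  rw [hlogeq]
  ring

lemma lemA {l : ℝ} (hl : l ∈ Icc (0:ℝ) 4) :
    (1 + (4 - l)/(4 + l)) * ellipticK ((4 - l)/(4 + l))
      = ∫ t in (0:ℝ)..1, 8 / Real.sqrt ((1-t^2) * ((4+l)^2 - (4-l)^2 * t^2)) := by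
  have h4l : (0:ℝ) < 4 + l := by linarith [hl.1]
  simp only [ellipticK]
  rw [← intervalIntegral.integral_const_mul]
  apply intervalIntegral.integral_congr
  intro t _
  set k := (4-l)/(4+l) with hkdef
  have hk : k * (4+l) = 4 - l := by rw [hkdef]; field_simp
  have key : (1-t^2) * ((4+l)^2 - (4-l)^2 * t^2) = (4+l)^2 * ((1-t^2)*(1-k^2*t^2)) := by
    rw [show (4-l)^2 = k^2*(4+l)^2 by rw [← hk]; ring]
    ring
  show (1 + k) * (1 / Real.sqrt ((1-t^2)*(1-k^2*t^2)))
      = 8 / Real.sqrt ((1-t^2) * ((4+l)^2 - (4-l)^2 * t^2))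
  rw [key, Real.sqrt_mul (sq_nonneg _), Real.sqrt_sq h4l.le]
  rw [show (1:ℝ) + k = 8/(4+l) by rw [hkdef]; field_simp; ring]
  rw [div_mul_div_comm, mul_one]

lemma intD : IntegrableOn (fun t : ℝ => 8 * (1 / Real.sqrt (1 - t^2))) (Ioo (0:ℝ) 1) := by
  have h := intervalIntegral.integrableOn_deriv_of_nonneg
    (g := fun t : ℝ => 8 * Real.arcsin t) (g' := fun t : ℝ => 8 * (1 / Real.sqrt (1 - t^2)))
    (a := 0) (b := 1)
    ((continuous_const.mul Real.continuous_arcsin).continuousOn)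
    (fun x hx => ((Real.hasDerivAt_arcsin (by linarith [hx.1]) (by linarith [hx.2])).const_mul 8))
    (fun x hx => by positivity)
  exact h.mono_set Ioo_subset_Ioc_self

lemma intM : IntegrableOn (fun t : ℝ => 8 * Real.log (1 + Real.sqrt (1-t^2)) / (1-t^2))
    (Ioo (0:ℝ) 1) := by
  apply Integrable.mono intD
  · apply Measurable.aestronglyMeasurable
    apply Measurable.div _ (by fun_prop)
    exact (Real.measurable_log.comp (by fun_prop)).const_mul 8
  · rw [ae_restrict_iff' measurableSet_Ioo]
    filter_upwards with t ht
    obtain ⟨ht0, ht1⟩ := ht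
    have h1t : (0:ℝ) < 1 - t^2 := by nlinarith
    have hs : 0 < Real.sqrt (1-t^2) := Real.sqrt_pos.mpr h1t
    have hs2 : Real.sqrt (1-t^2)^2 = 1 - t^2 := Real.sq_sqrt h1t.le
    have hlognn : 0 ≤ Real.log (1 + Real.sqrt (1-t^2)) := Real.log_nonneg (by linarith)
    have hlogle : Real.log (1 + Real.sqrt (1-t^2)) ≤ Real.sqrt (1-t^2) := by
      have := Real.log_le_sub_one_of_pos (show (0:ℝ) < 1 + Real.sqrt (1-t^2) by linarith)
      linarith
    set s := Real.sqrt (1-t^2) with hsdef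
    rw [Real.norm_of_nonneg (by positivity), Real.norm_of_nonneg (by positivity)]
    rw [div_le_iff₀ h1t, show 8*(1/s)*(1-t^2) = 8*s from by rw [← hs2]; field_simp]
    linarith

/-- `∫₀⁴ (1 + k(λ))·K(k(λ)) dλ = π²` where `k(λ) = (4-λ)/(4+λ)`. -/
theorem integral_density_eq_pi_sq :
    (∫ lam in (0:ℝ)..4,
        (1 + (4 - lam)/(4 + lam)) * ellipticK ((4 - lam)/(4 + lam))) = π^2 := by
  have h01 : (0:ℝ) ≤ 1 := by norm_num
  have h04 : (0:ℝ) ≤ 4 := by norm_num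
  have step1 : (∫ lam in (0:ℝ)..4,
        (1 + (4 - lam)/(4 + lam)) * ellipticK ((4 - lam)/(4 + lam)))
      = ∫ l in (0:ℝ)..4, ∫ t in (0:ℝ)..1, 8 / Real.sqrt ((1-t^2) * ((4+l)^2 - (4-l)^2 * t^2)) :=
    intervalIntegral.integral_congr (fun l hl => lemA (by rwa [Set.uIcc_of_le h04] at hl))
  rw [step1]
  rw [intervalIntegral.integral_of_le h04, integral_Ioc_eq_integral_Ioo]
  have hinner : ∀ l : ℝ, (∫ t in (0:ℝ)..1, 8 / Real.sqrt ((1-t^2) * ((4+l)^2 - (4-l)^2 * t^2)))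
      = ∫ t in Ioo (0:ℝ) 1, 8 / Real.sqrt ((1-t^2) * ((4+l)^2 - (4-l)^2 * t^2)) := fun l => by
    rw [intervalIntegral.integral_of_le h01, integral_Ioc_eq_integral_Ioo]
  simp_rw [hinner]
  -- positivity of the inner expression
  have hposl : ∀ t ∈ Ioo (0:ℝ) 1, ∀ l ∈ Icc (0:ℝ) 4,
      0 < (1-t^2) * ((4+l)^2 - (4-l)^2 * t^2) := by
    intro t ht l hl
    obtain ⟨ht0, ht1⟩ := ht; obtain ⟨hl0, hl4⟩ := hl
    have h1t : (0:ℝ) < 1 - t^2 := by nlinarith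
    have h1 : (4-l)^2 ≤ (4+l)^2 := by nlinarith
    have h2 : (4-l)^2 * t^2 ≤ (4+l)^2 * t^2 := by nlinarith [sq_nonneg t]
    have h3 : (0:ℝ) < (4+l)^2 * (1-t^2) := mul_pos (by positivity) h1t
    nlinarith
  have hmeas1 : AEStronglyMeasurable
      (Function.uncurry fun l t : ℝ => 8 / Real.sqrt ((1-t^2) * ((4+l)^2 - (4-l)^2 * t^2)))
      ((volume.restrict (Ioo (0:ℝ) 4)).prod (volume.restrict (Ioo (0:ℝ) 1))) := by
    apply Measurable.aestronglyMeasurable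
    apply Measurable.div measurable_const
    exact (Real.continuous_sqrt.measurable).comp (by fun_prop)
  have hsec1 : ∀ t ∈ Ioo (0:ℝ) 1, IntegrableOn
      (fun l => 8 / Real.sqrt ((1-t^2) * ((4+l)^2 - (4-l)^2 * t^2))) (Ioo (0:ℝ) 4) := by
    intro t ht
    apply (ContinuousOn.integrableOn_Icc ?_).mono_set Ioo_subset_Icc_self
    apply ContinuousOn.div continuousOn_const (ContinuousOn.sqrt (by fun_prop))
    intro l hl
    exact (Real.sqrt_pos.mpr (hposl t ht l hl)).ne'
  have hmarg1 : ∀ t ∈ Ioo (0:ℝ) 1,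
      (∫ l in Ioo (0:ℝ) 4, 8 / Real.sqrt ((1-t^2) * ((4+l)^2 - (4-l)^2 * t^2)))
        = 8 * Real.log (1 + Real.sqrt (1-t^2)) / (1-t^2) := by
    intro t ht
    rw [← integral_Ioc_eq_integral_Ioo, ← intervalIntegral.integral_of_le h04]
    exact ftc1 ht
  have hint1 : Integrable
      (Function.uncurry fun l t : ℝ => 8 / Real.sqrt ((1-t^2) * ((4+l)^2 - (4-l)^2 * t^2)))
      ((volume.restrict (Ioo (0:ℝ) 4)).prod (volume.restrict (Ioo (0:ℝ) 1))) := by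
    rw [MeasureTheory.integrable_prod_iff' hmeas1]
    constructor
    · filter_upwards [ae_restrict_mem measurableSet_Ioo] with t ht
      exact hsec1 t ht
    · apply Integrable.congr intM
      filter_upwards [ae_restrict_mem measurableSet_Ioo] with t ht
      simp only [Function.uncurry_apply_pair]
      rw [MeasureTheory.integral_congr_ae (g := fun l =>
            8 / Real.sqrt ((1-t^2) * ((4+l)^2 - (4-l)^2 * t^2)))
          (Filter.Eventually.of_forall fun l => Real.norm_of_nonneg (by positivity))]
      exact (hmarg1 t ht).symm
  rw [MeasureTheory.integral_integral_swap hint1]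
  -- now replace inner l-integral by M t, then by the a-integral
  rw [MeasureTheory.setIntegral_congr_ae measurableSet_Ioo
      (Filter.Eventually.of_forall (fun t ht => by
        rw [hmarg1 t ht, ftc2 ht, intervalIntegral.integral_of_le h01,
          integral_Ioc_eq_integral_Ioo]))]
  -- Fubini 2
  have hmeas2 : AEStronglyMeasurable
      (Function.uncurry fun t a : ℝ => 8 / (Real.sqrt (1-t^2) * (1 + a * Real.sqrt (1-t^2))))
      ((volume.restrict (Ioo (0:ℝ) 1)).prod (volume.restrict (Ioo (0:ℝ) 1))) := by
    apply Measurable.aestronglyMeasurable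
    apply Measurable.div measurable_const
    apply Measurable.mul
    · exact (Real.continuous_sqrt.measurable).comp (by fun_prop)
    · apply Measurable.add measurable_const
      exact (measurable_snd.mul ((Real.continuous_sqrt.measurable).comp (by fun_prop)))
  have hsec2 : ∀ t ∈ Ioo (0:ℝ) 1, IntegrableOn
      (fun a => 8 / (Real.sqrt (1-t^2) * (1 + a * Real.sqrt (1-t^2)))) (Ioo (0:ℝ) 1) := by
    intro t ht
    obtain ⟨ht0, ht1⟩ := ht
    have h1t : (0:ℝ) < 1 - t^2 := by nlinarith
    have hs : 0 < Real.sqrt (1-t^2) := Real.sqrt_pos.mpr h1t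
    apply (ContinuousOn.integrableOn_Icc ?_).mono_set Ioo_subset_Icc_self
    apply ContinuousOn.div continuousOn_const (by fun_prop)
    intro a ha
    have ha0 := ha.1
    positivity
  have hmarg2 : ∀ t ∈ Ioo (0:ℝ) 1,
      (∫ a in Ioo (0:ℝ) 1, 8 / (Real.sqrt (1-t^2) * (1 + a * Real.sqrt (1-t^2))))
        = 8 * Real.log (1 + Real.sqrt (1-t^2)) / (1-t^2) := by
    intro t ht
    rw [← integral_Ioc_eq_integral_Ioo, ← intervalIntegral.integral_of_le h01]
    exact (ftc2 ht).symm
  have hint2 : Integrable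
      (Function.uncurry fun t a : ℝ => 8 / (Real.sqrt (1-t^2) * (1 + a * Real.sqrt (1-t^2))))
      ((volume.restrict (Ioo (0:ℝ) 1)).prod (volume.restrict (Ioo (0:ℝ) 1))) := by
    rw [MeasureTheory.integrable_prod_iff hmeas2]
    constructor
    · filter_upwards [ae_restrict_mem measurableSet_Ioo] with t ht
      exact hsec2 t ht
    · apply Integrable.congr intM
      filter_upwards [ae_restrict_mem measurableSet_Ioo] with t ht
      simp only [Function.uncurry_apply_pair]
      have hs : 0 ≤ Real.sqrt (1-t^2) := Real.sqrt_nonneg _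
      rw [MeasureTheory.integral_congr_ae (g := fun a =>
            8 / (Real.sqrt (1-t^2) * (1 + a * Real.sqrt (1-t^2))))
          (ae_restrict_of_forall_mem measurableSet_Ioo fun a ha =>
            Real.norm_of_nonneg (by
              have ha0 := ha.1.le
              positivity))]
      exact (hmarg2 t ht).symm
  rw [MeasureTheory.integral_integral_swap hint2]
  rw [MeasureTheory.setIntegral_congr_ae measurableSet_Ioo
      (Filter.Eventually.of_forall (fun a ha => by
        rw [← integral_Ioc_eq_integral_Ioo, ← intervalIntegral.integral_of_le h01, ftc3 ha]))]
  rw [← integral_Ioc_eq_integral_Ioo, ← intervalIntegral.integral_of_le h01]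
  exact ftc4

end Aux
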